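/- arXiv:2506.23019 — 3 statements merged into one kernel-verified Lean document; each statement's English description precedes it below -/
import Mathlib

section
/- Let T be an alternating trilinear form on V and A linear with T(A x, y, z) = T(x, A y, z). With Q := -A², N_A(x,y,z) := -T(A x, A y, z) - T(x, y, A² z) - T(A x, y, A z) - T(x, A y, A z), and dF(x,y,z) := -T(x,y,A z) - T(y,z,A x) - T(z,x,A y), one has T(Q x, y, z) = (1/4) N_A(x,y,z) and (1/4) N_A(x,y,z) = (1/3) dF(A x, y, z). -/
theorem stmt_9 {V : Type*} [AddCommGroup V] [Module ℝ V]
    (T : V →ₗ[ℝ] V →ₗ[ℝ] V →ₗ[ℝ] ℝ)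
    (hT12 : ∀ x y z : V, T x y z = -T y x z)
    (hT23 : ∀ x y z : V, T x y z = -T x z y)
    (A Q : V →ₗ[ℝ] V)
    (hAT : ∀ x y z : V, T (A x) y z = T x (A y) z)
    (hQ : ∀ x : V, Q x = -(A (A x)))
    (N : V → V → V → ℝ)
    (hN : ∀ x y z : V,
      N x y z = -T (A x) (A y) z - T x y (A (A z)) - T (A x) y (A z) - T x (A y) (A z))
    (dF : V → V → V → ℝ)
    (hdF : ∀ x y z : V, dF x y z = -T x y (A z) - T y z (A x) - T z x (A y)) :
    (∀ x y z : V, T (Q x) y z = (1 / 4) * N x y z) ∧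
    (∀ x y z : V, (1 / 4) * N x y z = (1 / 3) * dF (A x) y z) := by
  have hcyc : ∀ x y z : V, T x y z = T z x y := by
    intro x y z
    rw [hT12 z x y, hT23 x z y]; ring
  have h3 : ∀ x y z : V, T x y (A z) = T (A x) y z := by
    intro x y z
    rw [hT23 x y (A z), ← hAT x z y, hT23 (A x) z y]; ring
  have e1 : ∀ x y z : V, T (A x) (A y) z = T (A (A x)) y z :=
    fun x y z => (hAT (A x) y z).symm
  have e3 : ∀ x y z : V, T (A x) y (A z) = T (A (A x)) y z :=
    fun x y z => h3 (A x) y z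
  have e2 : ∀ x y z : V, T x y (A (A z)) = T (A (A x)) y z := by
    intro x y z; rw [h3 x y (A z), e3]
  have e4 : ∀ x y z : V, T x (A y) (A z) = T (A (A x)) y z := by
    intro x y z; rw [← hAT x y (A z), e3]
  have e5 : ∀ x y z : V, T y z (A (A x)) = T (A (A x)) y z :=
    fun x y z => hcyc y z (A (A x))
  have e6 : ∀ x y z : V, T z (A x) (A y) = T (A (A x)) y z := by
    intro x y z; rw [hcyc z (A x) (A y), hcyc (A y) z (A x), e1]
  constructor <;> intro x y z
  · rw [hQ, hN, e1, e2, e3, e4]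
    simp only [map_neg, LinearMap.neg_apply]
    ring
  · rw [hN, hdF, e1, e2, e3, e4, e5, e6]
    ring
end

section
/- Let T be an alternating trilinear form on V and A, Q, ξ, η as in a weak almost contact structure. Define the weak-almost-contact Nijenhuis form N^wac(x,y,z) := N_A(x,y,z) + dη(x,y)·η(z), where dη(x,y) = T(x,y,ξ). If T satisfies the Q-torsion condition T(x,y,Qz) = T(x,Qy,z), then N^wac is totally skew-symmetric (alternating) in (x,y,z). -/
theorem stmt_16 {V : Type*} [AddCommGroup V] [Module ℝ V]
    (g : V →ₗ[ℝ] V →ₗ[ℝ] ℝ)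
    (hg_symm : ∀ x y : V, g x y = g y x)
    (hg_nd : ∀ x : V, (∀ y : V, g x y = 0) → x = 0)
    (T : V →ₗ[ℝ] V →ₗ[ℝ] V →ₗ[ℝ] ℝ)
    (hT12 : ∀ x y z : V, T x y z = -T y x z)
    (hT23 : ∀ x y z : V, T x y z = -T x z y)
    (A Q : V →ₗ[ℝ] V) (η : V →ₗ[ℝ] ℝ) (ξ : V)
    (hA_skew : ∀ x y : V, g (A x) y = -g x (A y))
    (hη : ∀ x : V, η x = g x ξ)
    (hηξ : η ξ = 1)
    (hAξ : A ξ = 0)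
    (hQξ : Q ξ = ξ)
    (hA2 : ∀ x : V, A (A x) = -(Q x) + η x • ξ)
    (dη : V → V → ℝ)
    (hdη : ∀ x y : V, dη x y = T x y ξ)
    (N : V → V → V → ℝ)
    (hN : ∀ x y z : V,
      N x y z = -T (A x) (A y) z - T x y (A (A z)) - T (A x) y (A z) - T x (A y) (A z))
    (Nwac : V → V → V → ℝ)
    (hNwac : ∀ x y z : V, Nwac x y z = N x y z + dη x y * η z)
    (hQT : ∀ x y z : V, T x y (Q z) = T x (Q y) z) :
    (∀ x y z : V, Nwac x y z = -Nwac y x z) ∧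
    (∀ x y z : V, Nwac x y z = -Nwac x z y) := by
  have key : ∀ x y z : V, Nwac x y z =
      T x y (Q z) - T (A x) (A y) z - T (A x) y (A z) - T x (A y) (A z) := by
    intro x y z
    rw [hNwac, hN, hdη, hA2 z]
    simp only [map_add, map_neg, map_smul, smul_eq_mul]
    ring
  constructor
  · intro x y z
    rw [key, key]
    have h1 := hT12 x y (Q z)
    have h2 := hT12 (A x) (A y) z
    have h3 := hT12 (A x) y (A z)
    have h4 := hT12 x (A y) (A z)
    linarith
  · intro x y z
    rw [key, key]
    have h1 : T x y (Q z) = -T x z (Q y) := by rw [hQT, hT23]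
    have h2 := hT23 (A x) (A y) z
    have h3 := hT23 (A x) y (A z)
    have h4 := hT23 x (A y) (A z)
    linarith
end

section
/- Let T be an alternating trilinear form on V and A, Q, ξ, η as in a weak almost para-contact structure (A² = Q - η⊗ξ, A ξ = 0, Q ξ = ξ). Define N^wapc(x,y,z) := N_A(x,y,z) - dη(x,y)·η(z) with dη(x,y) = T(x,y,ξ). If T satisfies T(Q x, y, z) = T(x, Q y, z) = T(x, y, Q z) for all x, y, z, then N^wapc(x,y,z) = -N^wapc(x,z,y) for all x, y, z (N^wapc is totally skew-symmetric). -/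
theorem stmt_17 {V : Type*} [AddCommGroup V] [Module ℝ V]
    (g : V →ₗ[ℝ] V →ₗ[ℝ] ℝ)
    (hg_symm : ∀ x y : V, g x y = g y x)
    (hg_nd : ∀ x : V, (∀ y : V, g x y = 0) → x = 0)
    (T : V →ₗ[ℝ] V →ₗ[ℝ] V →ₗ[ℝ] ℝ)
    (hT12 : ∀ x y z : V, T x y z = -T y x z)
    (hT23 : ∀ x y z : V, T x y z = -T x z y)
    (A Q : V →ₗ[ℝ] V) (η : V →ₗ[ℝ] ℝ) (ξ : V)
    (hA_skew : ∀ x y : V, g (A x) y = -g x (A y))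
    (hη : ∀ x : V, η x = g x ξ)
    (hηξ : η ξ = 1)
    (hAξ : A ξ = 0)
    (hQξ : Q ξ = ξ)
    (hA2 : ∀ x : V, A (A x) = Q x - η x • ξ)
    (dη : V → V → ℝ)
    (hdη : ∀ x y : V, dη x y = T x y ξ)
    (N : V → V → V → ℝ)
    (hN : ∀ x y z : V,
      N x y z = -T (A x) (A y) z - T x y (A (A z)) - T (A x) y (A z) - T x (A y) (A z))
    (Nwapc : V → V → V → ℝ)
    (hNwapc : ∀ x y z : V, Nwapc x y z = N x y z - dη x y * η z)
    (hQT : ∀ x y z : V, T (Q x) y z = T x (Q y) z ∧ T x (Q y) z = T x y (Q z)) :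
    ∀ x y z : V, Nwapc x y z = -Nwapc x z y := by
  intro x y z
  have key : Nwapc x y z = -T (A x) (A y) z - T x y (Q z) - T (A x) y (A z) - T x (A y) (A z) := by
    rw [hNwapc, hN, hdη, hA2, map_sub, map_smul]
    simp only [smul_eq_mul]
    ring
  have key' : Nwapc x z y = -T (A x) (A z) y - T x z (Q y) - T (A x) z (A y) - T x (A z) (A y) := by
    rw [hNwapc, hN, hdη, hA2, map_sub, map_smul]
    simp only [smul_eq_mul]
    ring
  rw [key, key']
  have h1 := hT23 (A x) (A y) z
  have h2 : T x y (Q z) = -T x z (Q y) := by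
    rw [← (hQT x y z).2, hT23 x (Q y) z]
  have h3 := hT23 (A x) y (A z)
  have h4 := hT23 x (A y) (A z)
  linarith
end
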